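/- The semigroup M_n(𝕋_{[0,1]}) of n×n matrices over the truncated tropical semiring 𝕋_{[0,1]} is strongly permutable if and only if n = 1. -/

import Mathlib

set_option maxHeartbeats 1000000

universe u

/-! ### Semiring classes.

A *semiring* here is a nonempty set with an associative commutative addition and an
associative multiplication which distributes over addition on both sides; no zero or
identity element is assumed. -/

class PlainSemiring (S : Type u) extends Add S, Mul S where
  nonempty' : Nonempty S
  add_assoc' : ∀ a b c : S, a + b + c = a + (b + c)
  add_comm' : ∀ a b : S, a + b = b + a
  mul_assoc' : ∀ a b c : S, a * b * c = a * (b * c)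
  left_distrib' : ∀ a b c : S, a * (b + c) = a * b + a * c
  right_distrib' : ∀ a b c : S, (a + b) * c = a * c + b * c

/-- A bipotent semiring: `x + y` is always either `x` or `y`.
(The induced total order is given by `x ≤ y ↔ x + y = y`.) -/
class BipotentSemiring (S : Type u) extends PlainSemiring S where
  bipotent : ∀ a b : S, a + b = a ∨ a + b = b

/-- A commutative bipotent semiring. -/
class CommBipotentSemiring (S : Type u) extends BipotentSemiring S where
  mul_comm' : ∀ a b : S, a * b = b * a

/-- `mpow a n` is the `(n+1)`-st power of `a`, so the set of positive powers of `a`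
is exactly `Set.range (mpow a)`, and the multiplicative order of `a` is the
cardinality of `Set.range (mpow a)`. -/
def mpow {S : Type*} [Mul S] (a : S) : ℕ → S
  | 0 => a
  | n + 1 => mpow a n * a

lemma mpow_mul_mpow {S : Type*} [PlainSemiring S] (a : S) (m n : ℕ) :
    mpow a m * mpow a n = mpow a (m + n + 1) := by
  induction n with
  | zero => rfl
  | succ n ih =>
    show mpow a m * (mpow a n * a) = mpow a (m + n + 1) * a
    rw [← PlainSemiring.mul_assoc', ih]

/-! ### Products of finite families, and permutability. -/

/-- Fold step used to define sums/products of possibly empty families in a structure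
with no neutral element; the overall fold is `none` iff the family is empty. -/
def optStep {S : Type*} (op : S → S → S) : Option S → S → Option S :=
  fun acc x => some (acc.elim x (fun a => op a x))

/-- The sum `s 0 + s 1 + ⋯` of a finite family, as an `Option` (`none` iff `k = 0`). -/
def finSum {S : Type*} [Add S] {k : ℕ} (s : Fin k → S) : Option S :=
  (List.ofFn s).foldl (optStep (· + ·)) none

/-- The product `s 0 * s 1 * ⋯` of a finite family, as an `Option` (`none` iff `k = 0`). -/
def finProd {S : Type*} [Mul S] {k : ℕ} (s : Fin k → S) : Option S :=
  (List.ofFn s).foldl (optStep (· * ·)) none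

/-- A multiplicative structure is `k`-permutable if every product of `k` elements is
preserved by some non-identity permutation of its factors. -/
def KPermutable (S : Type*) [Mul S] (k : ℕ) : Prop :=
  ∀ s : Fin k → S, ∃ σ : Equiv.Perm (Fin k), σ ≠ Equiv.refl (Fin k) ∧
    finProd (fun i => s (σ i)) = finProd s

/-- A semigroup is strongly permutable if it is `k`-permutable for some `k ≥ 2`. -/
def StronglyPermutable (S : Type*) [Mul S] : Prop :=
  ∃ k : ℕ, 2 ≤ k ∧ KPermutable S k

/-- A semigroup is weakly permutable if for some `k ≥ 2`, any product of `k` elements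
is computed identically by two distinct permutations of its factors. -/
def WeaklyPermutable (S : Type*) [Mul S] : Prop :=
  ∃ k : ℕ, 2 ≤ k ∧ ∀ s : Fin k → S, ∃ σ τ : Equiv.Perm (Fin k), σ ≠ τ ∧
    finProd (fun i => s (σ i)) = finProd (fun i => s (τ i))

/-- Isomorphism of semirings (bijection preserving addition and multiplication). -/
def RingLikeIso (S T : Type*) [Add S] [Mul S] [Add T] [Mul T] : Prop :=
  ∃ f : S → T, Function.Bijective f ∧ (∀ a b : S, f (a + b) = f a + f b) ∧
    (∀ a b : S, f (a * b) = f a * f b)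

/-! ### Matrices. -/

/-- Square `n × n` matrices over `S`. -/
def MatSR (S : Type u) (n : ℕ) : Type u := Fin n → Fin n → S

/-- Matrix multiplication, `(A*B) i j = Σ_k (A i k * B k j)`.  (For `n ≥ 1` — the only
case of interest — the `getD` default value is never used.) -/
def matMul {S : Type*} [Add S] [Mul S] {n : ℕ} (A B : MatSR S n) : MatSR S n :=
  fun i j => (finSum (fun k : Fin n => A i k * B k j)).getD (A i j * B i j)

/-- The multiplicative semigroup `M_n(S)`. -/
instance {S : Type*} [Add S] [Mul S] {n : ℕ} : Mul (MatSR S n) := ⟨matMul⟩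

/-! ### `S⁰`: adjoining a zero, and upper triangular matrices. -/

/-- `S` with a zero (additively neutral, multiplicatively absorbing) element adjoined. -/
inductive Adj0 (S : Type u) : Type u
  | zero : Adj0 S
  | elem : S → Adj0 S

namespace Adj0

def add' {S : Type*} [Add S] : Adj0 S → Adj0 S → Adj0 S
  | .zero, b => b
  | .elem a, .zero => .elem a
  | .elem a, .elem b => .elem (a + b)

def mul' {S : Type*} [Mul S] : Adj0 S → Adj0 S → Adj0 S
  | .zero, _ => .zero
  | .elem _, .zero => .zero
  | .elem a, .elem b => .elem (a * b)

instance {S : Type*} [Add S] : Add (Adj0 S) := ⟨add'⟩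
instance {S : Type*} [Mul S] : Mul (Adj0 S) := ⟨mul'⟩

@[simp] lemma zero_add {S : Type*} [Add S] (b : Adj0 S) : (zero : Adj0 S) + b = b := rfl
@[simp] lemma add_zero {S : Type*} [Add S] (a : Adj0 S) : a + (zero : Adj0 S) = a := by
  cases a <;> rfl
@[simp] lemma elem_add_elem {S : Type*} [Add S] (a b : S) :
    (elem a : Adj0 S) + elem b = elem (a + b) := rfl
@[simp] lemma zero_mul {S : Type*} [Mul S] (b : Adj0 S) : (zero : Adj0 S) * b = zero := rfl
@[simp] lemma mul_zero {S : Type*} [Mul S] (a : Adj0 S) : a * (zero : Adj0 S) = zero := by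
  cases a <;> rfl
@[simp] lemma elem_mul_elem {S : Type*} [Mul S] (a b : S) :
    (elem a : Adj0 S) * elem b = elem (a * b) := rfl

lemma add_eq_zero_iff {S : Type*} [Add S] (a b : Adj0 S) :
    a + b = zero ↔ a = zero ∧ b = zero := by
  cases a <;> cases b <;> simp

end Adj0

lemma foldl_optStep_adj0 {S : Type*} [Add S] (l : List (Adj0 S)) (a : Adj0 S) :
    ∃ c : Adj0 S, l.foldl (optStep (· + ·)) (some a) = some c ∧
      (c = Adj0.zero ↔ a = Adj0.zero ∧ ∀ x ∈ l, x = Adj0.zero) := by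
  induction l generalizing a with
  | nil => exact ⟨a, rfl, by simp⟩
  | cons x l ih =>
    obtain ⟨c, hc, hiff⟩ := ih (a + x)
    refine ⟨c, ?_, ?_⟩
    · simpa [optStep] using hc
    · rw [hiff, Adj0.add_eq_zero_iff]
      simp only [List.mem_cons, forall_eq_or_imp]
      tauto

lemma finSum_adj0_eq_zero {S : Type*} [Add S] {n : ℕ} (f : Fin n → Adj0 S) (i : Fin n)
    (d : Adj0 S) (h : ∀ k, f k = Adj0.zero) : (finSum f).getD d = Adj0.zero := by
  cases n with
  | zero => exact i.elim0
  | succ m =>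
    rw [finSum, List.ofFn_succ, List.foldl_cons]
    obtain ⟨c, hc, hiff⟩ := foldl_optStep_adj0 (List.ofFn fun i : Fin m => f i.succ) (f 0)
    rw [show optStep (· + ·) none (f 0) = some (f 0) from rfl, hc]
    have : c = Adj0.zero := hiff.mpr ⟨h 0, by
      intro x hx
      rw [List.mem_ofFn] at hx
      obtain ⟨j, rfl⟩ := hx
      exact h _⟩
    simp [this]

lemma finSum_adj0_ne_zero {S : Type*} [Add S] {n : ℕ} (f : Fin n → Adj0 S) (i : Fin n)
    (d : Adj0 S) (h : f i ≠ Adj0.zero) : (finSum f).getD d ≠ Adj0.zero := by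
  cases n with
  | zero => exact i.elim0
  | succ m =>
    rw [finSum, List.ofFn_succ, List.foldl_cons]
    obtain ⟨c, hc, hiff⟩ := foldl_optStep_adj0 (List.ofFn fun i : Fin m => f i.succ) (f 0)
    rw [show optStep (· + ·) none (f 0) = some (f 0) from rfl, hc]
    simp only [Option.getD_some]
    intro hcz
    obtain ⟨h0, hall⟩ := hiff.mp hcz
    induction i using Fin.cases with
    | zero => exact h h0
    | succ j => exact h (hall _ (List.mem_ofFn.mpr ⟨j, rfl⟩))

/-- Upper-triangularity over `S⁰`: entries strictly below the diagonal are the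
adjoined zero; entries on and above the diagonal lie in `S`. -/
def IsUT {S : Type*} {n : ℕ} (A : MatSR (Adj0 S) n) : Prop :=
  (∀ i j : Fin n, (j : ℕ) < (i : ℕ) → A i j = Adj0.zero) ∧
  (∀ i j : Fin n, (i : ℕ) ≤ (j : ℕ) → ∃ s : S, A i j = Adj0.elem s)

lemma IsUT.mul {S : Type*} [Add S] [Mul S] {n : ℕ} {A B : MatSR (Adj0 S) n}
    (hA : IsUT A) (hB : IsUT B) : IsUT (matMul A B) := by
  constructor
  · intro i j hji
    apply finSum_adj0_eq_zero _ i
    intro k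
    rcases le_or_gt (i : ℕ) (k : ℕ) with h | h
    · rw [hB.1 k j (lt_of_lt_of_le hji h), Adj0.mul_zero]
    · rw [hA.1 i k h, Adj0.zero_mul]
  · intro i j hij
    have hne : matMul A B i j ≠ Adj0.zero := by
      apply finSum_adj0_ne_zero _ i
      obtain ⟨s, hs⟩ := hA.2 i i le_rfl
      obtain ⟨t, ht⟩ := hB.2 i j hij
      rw [hs, ht, Adj0.elem_mul_elem]
      simp
    cases hc : matMul A B i j with
    | zero => exact absurd hc hne
    | elem s => exact ⟨s, rfl⟩

/-- The multiplicative semigroup `UT_n(S)` of upper triangular matrices over `S⁰`. -/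
def UTMat (S : Type u) (n : ℕ) : Type u := {A : MatSR (Adj0 S) n // IsUT A}

instance {S : Type*} [Add S] [Mul S] {n : ℕ} : Mul (UTMat S n) :=
  ⟨fun A B => ⟨matMul A.1 B.1, A.2.mul B.2⟩⟩

/-! ### `S^{01}`: adjoining a zero and an identity, and unitriangular matrices. -/

/-- `S` with a zero and a multiplicative identity adjoined (`S^{01}` in the paper).
The sum of `one` and an `elem` is left undefined in the paper; it is given an
arbitrary value here, and never arises in products of unitriangular matrices. -/
inductive Adj01 (S : Type u) : Type u
  | zero : Adj01 S
  | one : Adj01 S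
  | elem : S → Adj01 S

namespace Adj01

def add' {S : Type*} [Add S] : Adj01 S → Adj01 S → Adj01 S
  | .zero, b => b
  | a, .zero => a
  | .one, .one => .one
  | .one, .elem b => .elem b
  | .elem a, .one => .elem a
  | .elem a, .elem b => .elem (a + b)

def mul' {S : Type*} [Mul S] : Adj01 S → Adj01 S → Adj01 S
  | .zero, _ => .zero
  | _, .zero => .zero
  | .one, b => b
  | a, .one => a
  | .elem a, .elem b => .elem (a * b)

instance {S : Type*} [Add S] : Add (Adj01 S) := ⟨add'⟩
instance {S : Type*} [Mul S] : Mul (Adj01 S) := ⟨mul'⟩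

@[simp] lemma zero_add {S : Type*} [Add S] (b : Adj01 S) : (zero : Adj01 S) + b = b := by
  cases b <;> rfl
@[simp] lemma add_zero {S : Type*} [Add S] (a : Adj01 S) : a + (zero : Adj01 S) = a := by
  cases a <;> rfl
@[simp] lemma one_add_one {S : Type*} [Add S] : (one : Adj01 S) + one = one := rfl
@[simp] lemma elem_add_elem {S : Type*} [Add S] (a b : S) :
    (elem a : Adj01 S) + elem b = elem (a + b) := rfl
@[simp] lemma one_add_elem {S : Type*} [Add S] (b : S) :
    (one : Adj01 S) + elem b = elem b := rfl
@[simp] lemma elem_add_one {S : Type*} [Add S] (a : S) :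
    (elem a : Adj01 S) + one = elem a := rfl
@[simp] lemma zero_mul {S : Type*} [Mul S] (b : Adj01 S) : (zero : Adj01 S) * b = zero := by
  cases b <;> rfl
@[simp] lemma mul_zero {S : Type*} [Mul S] (a : Adj01 S) : a * (zero : Adj01 S) = zero := by
  cases a <;> rfl
@[simp] lemma one_mul {S : Type*} [Mul S] (b : Adj01 S) : (one : Adj01 S) * b = b := by
  cases b <;> rfl
@[simp] lemma mul_one {S : Type*} [Mul S] (a : Adj01 S) : a * (one : Adj01 S) = a := by
  cases a <;> rfl
@[simp] lemma elem_mul_elem {S : Type*} [Mul S] (a b : S) :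
    (elem a : Adj01 S) * elem b = elem (a * b) := rfl

lemma mul_ne_one {S : Type*} [Mul S] {a b : Adj01 S} (ha : a ≠ one) (hb : b ≠ one) :
    a * b ≠ one := by
  cases a <;> cases b <;> simp_all

lemma add_ne_one {S : Type*} [Add S] {a b : Adj01 S} (ha : a ≠ one) (hb : b ≠ one) :
    a + b ≠ one := by
  cases a <;> cases b <;> simp_all

lemma add_01 {S : Type*} [Add S] {a b : Adj01 S} (ha : a = zero ∨ a = one)
    (hb : b = zero ∨ b = one) :
    (a + b = zero ∨ a + b = one) ∧ (a + b = one ↔ a = one ∨ b = one) := by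
  rcases ha with rfl | rfl <;> rcases hb with rfl | rfl <;> simp

end Adj01

lemma foldl_optStep_adj01 {S : Type*} [Add S] (l : List (Adj01 S)) (a : Adj01 S)
    (ha : a = Adj01.zero ∨ a = Adj01.one) (hl : ∀ x ∈ l, x = Adj01.zero ∨ x = Adj01.one) :
    ∃ c : Adj01 S, l.foldl (optStep (· + ·)) (some a) = some c ∧
      (c = Adj01.zero ∨ c = Adj01.one) ∧
      (c = Adj01.one ↔ a = Adj01.one ∨ ∃ x ∈ l, x = Adj01.one) := by
  induction l generalizing a with
  | nil => exact ⟨a, rfl, ha, by simp⟩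
  | cons x l ih =>
    have hx := hl x (by simp)
    have key := Adj01.add_01 ha hx
    obtain ⟨c, hc, hc01, hiff⟩ := ih (a + x) key.1 (fun y hy => hl y (by simp [hy]))
    refine ⟨c, by simpa [optStep] using hc, hc01, ?_⟩
    rw [hiff, key.2]
    simp only [List.mem_cons, exists_eq_or_imp]
    tauto

lemma foldl_optStep_adj01_ne_one {S : Type*} [Add S] (l : List (Adj01 S)) (a : Adj01 S)
    (ha : a ≠ Adj01.one) (hl : ∀ x ∈ l, x ≠ Adj01.one) :
    ∃ c : Adj01 S, l.foldl (optStep (· + ·)) (some a) = some c ∧ c ≠ Adj01.one := by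
  induction l generalizing a with
  | nil => exact ⟨a, rfl, ha⟩
  | cons x l ih =>
    have hax : a + x ≠ Adj01.one := Adj01.add_ne_one ha (hl x (by simp))
    obtain ⟨c, hc, hcne⟩ := ih (a + x) hax (fun y hy => hl y (by simp [hy]))
    exact ⟨c, by simpa [optStep] using hc, hcne⟩

lemma finSum_adj01_eq_one {S : Type*} [Add S] {n : ℕ} (f : Fin n → Adj01 S) (i : Fin n)
    (d : Adj01 S) (h01 : ∀ k, f k = Adj01.zero ∨ f k = Adj01.one) (hi : f i = Adj01.one) :
    (finSum f).getD d = Adj01.one := by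
  cases n with
  | zero => exact i.elim0
  | succ m =>
    rw [finSum, List.ofFn_succ, List.foldl_cons]
    obtain ⟨c, hc, _, hiff⟩ := foldl_optStep_adj01 (List.ofFn fun i : Fin m => f i.succ) (f 0)
      (h01 0) (by
        intro x hx
        rw [List.mem_ofFn] at hx
        obtain ⟨j, rfl⟩ := hx
        exact h01 _)
    rw [show optStep (· + ·) none (f 0) = some (f 0) from rfl, hc]
    simp only [Option.getD_some]
    apply hiff.mpr
    induction i using Fin.cases with
    | zero => exact Or.inl hi
    | succ j => exact Or.inr ⟨f j.succ, List.mem_ofFn.mpr ⟨j, rfl⟩, hi⟩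

lemma finSum_adj01_eq_zero {S : Type*} [Add S] {n : ℕ} (f : Fin n → Adj01 S) (i : Fin n)
    (d : Adj01 S) (h : ∀ k, f k = Adj01.zero) : (finSum f).getD d = Adj01.zero := by
  cases n with
  | zero => exact i.elim0
  | succ m =>
    rw [finSum, List.ofFn_succ, List.foldl_cons]
    obtain ⟨c, hc, hc01, hiff⟩ := foldl_optStep_adj01 (List.ofFn fun i : Fin m => f i.succ)
      (f 0) (Or.inl (h 0)) (by
        intro x hx
        rw [List.mem_ofFn] at hx
        obtain ⟨j, rfl⟩ := hx
        exact Or.inl (h _))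
    rw [show optStep (· + ·) none (f 0) = some (f 0) from rfl, hc]
    simp only [Option.getD_some]
    rcases hc01 with h' | h'
    · exact h'
    · exfalso
      rcases hiff.mp h' with h'' | ⟨x, hx, hx1⟩
      · rw [h 0] at h''; cases h''
      · rw [List.mem_ofFn] at hx
        obtain ⟨j, rfl⟩ := hx
        rw [h _] at hx1; cases hx1

lemma finSum_adj01_ne_one {S : Type*} [Add S] {n : ℕ} (f : Fin n → Adj01 S) (i : Fin n)
    (d : Adj01 S) (h : ∀ k, f k ≠ Adj01.one) : (finSum f).getD d ≠ Adj01.one := by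
  cases n with
  | zero => exact i.elim0
  | succ m =>
    rw [finSum, List.ofFn_succ, List.foldl_cons]
    obtain ⟨c, hc, hcne⟩ := foldl_optStep_adj01_ne_one (List.ofFn fun i : Fin m => f i.succ)
      (f 0) (h 0) (by
        intro x hx
        rw [List.mem_ofFn] at hx
        obtain ⟨j, rfl⟩ := hx
        exact h _)
    rw [show optStep (· + ·) none (f 0) = some (f 0) from rfl, hc]
    simpa using hcne

/-- Unitriangularity over `S^{01}`: the adjoined zero strictly below the diagonal, the
adjoined identity on the diagonal, and entries of `S⁰` (i.e. anything except the
adjoined identity) strictly above the diagonal. -/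
def IsU {S : Type*} {n : ℕ} (A : MatSR (Adj01 S) n) : Prop :=
  (∀ i j : Fin n, (j : ℕ) < (i : ℕ) → A i j = Adj01.zero) ∧
  (∀ i : Fin n, A i i = Adj01.one) ∧
  (∀ i j : Fin n, (i : ℕ) < (j : ℕ) → A i j ≠ Adj01.one)

lemma IsU.mul {S : Type*} [Add S] [Mul S] {n : ℕ} {A B : MatSR (Adj01 S) n}
    (hA : IsU A) (hB : IsU B) : IsU (matMul A B) := by
  refine ⟨?_, ?_, ?_⟩
  · intro i j hji
    apply finSum_adj01_eq_zero _ i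
    intro k
    rcases le_or_gt (i : ℕ) (k : ℕ) with h | h
    · rw [hB.1 k j (lt_of_lt_of_le hji h), Adj01.mul_zero]
    · rw [hA.1 i k h, Adj01.zero_mul]
  · intro i
    apply finSum_adj01_eq_one _ i
    · intro k
      rcases lt_trichotomy (k : ℕ) (i : ℕ) with h | h | h
      · rw [hA.1 i k h, Adj01.zero_mul]; exact Or.inl rfl
      · have : k = i := Fin.ext h
        subst this
        rw [hA.2.1 k, hB.2.1 k, Adj01.one_mul]; exact Or.inr rfl
      · rw [hB.1 k i h, Adj01.mul_zero]; exact Or.inl rfl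
    · rw [hA.2.1 i, hB.2.1 i, Adj01.one_mul]
  · intro i j hij
    apply finSum_adj01_ne_one _ i
    intro k
    rcases lt_trichotomy (k : ℕ) (i : ℕ) with h | h | h
    · rw [hA.1 i k h, Adj01.zero_mul]; exact fun h => by cases h
    · have : k = i := Fin.ext h
      subst this
      rw [hA.2.1 k, Adj01.one_mul]
      exact hB.2.2 k j (by omega)
    · rcases lt_trichotomy (k : ℕ) (j : ℕ) with h' | h' | h'
      · exact Adj01.mul_ne_one (hA.2.2 i k h) (hB.2.2 k j h')
      · have : k = j := Fin.ext h'
        subst this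
        rw [hB.2.1 k, Adj01.mul_one]
        exact hA.2.2 i k h
      · rw [hB.1 k j h', Adj01.mul_zero]; exact fun h => by cases h

/-- The multiplicative monoid `U_n(S)` of unitriangular matrices over `S^{01}`. -/
def UMat (S : Type u) (n : ℕ) : Type u := {A : MatSR (Adj01 S) n // IsU A}

instance {S : Type*} [Add S] [Mul S] {n : ℕ} : Mul (UMat S n) :=
  ⟨fun A B => ⟨matMul A.1 B.1, A.2.mul B.2⟩⟩

/-! ### Monogenic subsemirings. -/

/-- The carrier of the monogenic subsemiring `⟨a⟩` generated by `a` is the set of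
positive powers of `a`; in a bipotent semiring it is closed under addition. -/
instance genAdd {S : Type*} [BipotentSemiring S] (a : S) : Add ↥(Set.range (mpow a)) :=
  ⟨fun p q => ⟨p.1 + q.1, by
    rcases BipotentSemiring.bipotent p.1 q.1 with h | h <;> rw [h]
    exacts [p.2, q.2]⟩⟩

instance genMul {S : Type*} [BipotentSemiring S] (a : S) : Mul ↥(Set.range (mpow a)) :=
  ⟨fun p q => ⟨p.1 * q.1, by
    obtain ⟨m, hm⟩ := p.2
    obtain ⟨n, hn⟩ := q.2
    exact ⟨m + n + 1, by rw [← hm, ← hn, mpow_mul_mpow]⟩⟩⟩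

/-! ### Concrete bipotent semirings. -/

/-- The tropical semiring `ℕ_max` of positive natural numbers: addition is `max`,
multiplication is ordinary addition. -/
def NMax : Type := {n : ℕ // 0 < n}

instance : Add NMax := ⟨fun a b => ⟨max a.1 b.1, by have := a.2; have := b.2; omega⟩⟩
instance : Mul NMax := ⟨fun a b => ⟨a.1 + b.1, by have := a.2; have := b.2; omega⟩⟩

/-- The tropical semiring `(-ℕ)_max` of negative integers: addition is `max`,
multiplication is ordinary addition. -/
def NegNMax : Type := {z : ℤ // z < 0}

instance : Add NegNMax := ⟨fun a b => ⟨max a.1 b.1, by have := a.2; have := b.2; omega⟩⟩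
instance : Mul NegNMax := ⟨fun a b => ⟨a.1 + b.1, by have := a.2; have := b.2; omega⟩⟩

/-- The truncated tropical semiring `[k]_max` on `{1,…,k}`: addition is `max`,
multiplication is `a·b = min (a+b) k`. -/
def KMax (k : ℕ) : Type := {n : ℕ // 0 < n ∧ n ≤ k}

instance {k : ℕ} : Add (KMax k) :=
  ⟨fun a b => ⟨max a.1 b.1, by have := a.2; have := b.2; omega⟩⟩
instance {k : ℕ} : Mul (KMax k) :=
  ⟨fun a b => ⟨min (a.1 + b.1) k, by have := a.2; have := b.2; omega⟩⟩

/-- The truncated tropical semiring `[-k]_max` on `{-k,…,-1}`: addition is `max`,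
multiplication is `a·b = max (a+b) (-k)`. -/
def NegKMax (k : ℕ) : Type := {z : ℤ // -(k : ℤ) ≤ z ∧ z ≤ -1}

instance {k : ℕ} : Add (NegKMax k) :=
  ⟨fun a b => ⟨max a.1 b.1, by have := a.2; have := b.2; omega⟩⟩
instance {k : ℕ} : Mul (NegKMax k) :=
  ⟨fun a b => ⟨max (a.1 + b.1) (-(k : ℤ)), by have := a.2; have := b.2; omega⟩⟩

/-- The two-element boolean semifield `𝔹`: `{0,1}` with `0 < 1`, addition `max` (= "or")
and the usual multiplication (= "and"). -/
def BoolSR : Type := Bool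

instance : Add BoolSR := ⟨fun a b => (Bool.or a b : Bool)⟩
instance : Mul BoolSR := ⟨fun a b => (Bool.and a b : Bool)⟩

/-- A chain semiring: a linearly ordered set with addition `max` and multiplication `min`. -/
def ChainSR (L : Type u) [LinearOrder L] : Type u := L

instance {L : Type u} [LinearOrder L] : Add (ChainSR L) := ⟨fun a b => (max a b : L)⟩
instance {L : Type u} [LinearOrder L] : Mul (ChainSR L) := ⟨fun a b => (min a b : L)⟩

/-- The three-element commutative bipotent semiring of Proposition 1: order `A < B < C`
(addition is `max`), every element multiplicatively idempotent, and all products of two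
distinct elements equal to `B`. -/
inductive Three : Type
  | A : Three
  | B : Three
  | C : Three
deriving DecidableEq

instance : Fintype Three :=
  ⟨{Three.A, Three.B, Three.C}, fun x => by cases x <;> simp⟩

def Three.add' : Three → Three → Three
  | .A, y => y
  | x, .A => x
  | .B, y => y
  | x, .B => x
  | .C, .C => .C

def Three.mul' : Three → Three → Three
  | .A, .A => .A
  | .B, .B => .B
  | .C, .C => .C
  | _, _ => .B

instance : Add Three := ⟨Three.add'⟩
instance : Mul Three := ⟨Three.mul'⟩

instance : CommBipotentSemiring Three where
  nonempty' := ⟨Three.A⟩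
  add_assoc' := by decide
  add_comm' := by decide
  mul_assoc' := by decide
  left_distrib' := by decide
  right_distrib' := by decide
  bipotent := by decide
  mul_comm' := by decide

/-- A bundled (possibly zero-less and identity-less) semiring, used to quantify over
semirings inside hypotheses. -/
structure BundledSemiring : Type 1 where
  carrier : Type
  add : carrier → carrier → carrier
  mul : carrier → carrier → carrier
  nonempty' : Nonempty carrier
  add_assoc' : ∀ a b c, add (add a b) c = add a (add b c)
  add_comm' : ∀ a b, add a b = add b a
  mul_assoc' : ∀ a b c, mul (mul a b) c = mul a (mul b c)
  left_distrib' : ∀ a b c, mul a (add b c) = add (mul a b) (mul a c)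
  right_distrib' : ∀ a b c, mul (add a b) c = add (mul a c) (mul b c)

/-! ### Semifields. -/

/-- `z` is a zero element: additively neutral and multiplicatively absorbing. -/
def IsZeroElem {S : Type*} [Add S] [Mul S] (z : S) : Prop :=
  ∀ x : S, z + x = x ∧ x + z = x ∧ z * x = z ∧ x * z = z

/-- `S` is a semifield: a commutative semiring, possibly without zero, whose set of
non-zero elements forms a group under multiplication (with identity `e`). -/
def IsSemifield (S : Type*) [Add S] [Mul S] : Prop :=
  ∃ e : S, ¬ IsZeroElem e ∧
    (∀ x : S, ¬ IsZeroElem x → e * x = x ∧ x * e = x) ∧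
    (∀ x y : S, ¬ IsZeroElem x → ¬ IsZeroElem y → ¬ IsZeroElem (x * y)) ∧
    (∀ x : S, ¬ IsZeroElem x → ∃ y : S, ¬ IsZeroElem y ∧ x * y = e ∧ y * x = e)

/-! ### Truncated tropical semirings. -/

/-- The underlying set `[x,y] ∪ {0}` of the truncated tropical semiring `𝕋_{[x,y]}`
(without the zero element `-∞`), for `0 ≤ x`.  Addition is `max`; multiplication is
`y`-truncated addition `a ⊗ b = min (a+b) y`, with the element `0` acting as the
multiplicative identity. -/
def TTb (x y : ℝ) (_hx : 0 ≤ x) : Type := {r : ℝ // r = 0 ∨ (x ≤ r ∧ r ≤ y)}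

namespace TTb

protected def add {x y : ℝ} {hx : 0 ≤ x} (a b : TTb x y hx) : TTb x y hx :=
  ⟨max a.1 b.1, by rcases max_choice a.1 b.1 with h | h <;> rw [h]
                   exacts [a.2, b.2]⟩

protected noncomputable def mul {x y : ℝ} {hx : 0 ≤ x} (a b : TTb x y hx) : TTb x y hx :=
  if ha : a.1 = 0 then b else if hb : b.1 = 0 then a else
    ⟨min (a.1 + b.1) y, by
      rcases a.2 with h | h
      · exact absurd h ha
      rcases b.2 with h' | h'
      · exact absurd h' hb
      right
      exact ⟨le_min (by linarith [h.1, h'.1]) (by linarith [h.1, h.2]), min_le_right _ _⟩⟩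

instance {x y : ℝ} {hx : 0 ≤ x} : Add (TTb x y hx) := ⟨TTb.add⟩
noncomputable instance {x y : ℝ} {hx : 0 ≤ x} : Mul (TTb x y hx) := ⟨TTb.mul⟩

end TTb

/-- The truncated tropical semiring `𝕋_{[x,y]}` (for `0 ≤ x < y`): the real interval
`[x,y]` together with a multiplicative identity `0` and a zero `-∞`, with addition
`max` and multiplication the `y`-truncated addition `a ⊗ b = min (a+b) y`. -/
abbrev TT (x y : ℝ) (hx : 0 ≤ x) : Type := Adj0 (TTb x y hx)

/-- The multiplicative identity `0` of `𝕋_{[x,y]}`. -/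
noncomputable def ttId (x y : ℝ) (hx : 0 ≤ x) : TT x y hx := Adj0.elem ⟨0, Or.inl rfl⟩

lemma ttId_mul {x y : ℝ} {hx : 0 ≤ x} (b : TT x y hx) : ttId x y hx * b = b := by
  cases b with
  | zero => rfl
  | elem e =>
    show Adj0.elem (TTb.mul ⟨0, Or.inl rfl⟩ e) = Adj0.elem e
    first
    | exact congrArg Adj0.elem (dif_pos rfl)
    | simp [TTb.mul]

/-- The subsemigroup `S` of `M_2(𝕋_{[1,z]})` of matrices of the form `[[0,a],[-∞,b]]`. -/
noncomputable def UpperS (z : ℝ) (hz : (0:ℝ) ≤ 1) : Type :=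
  {A : MatSR (TT 1 z hz) 2 // A 0 0 = ttId 1 z hz ∧ A 1 0 = Adj0.zero}

/-- The subsemigroup `S'` of `M_2(𝕋_{[1,z]})` of matrices of the form `[[0,-∞],[a,b]]`. -/
noncomputable def LowerS (z : ℝ) (hz : (0:ℝ) ≤ 1) : Type :=
  {A : MatSR (TT 1 z hz) 2 // A 0 0 = ttId 1 z hz ∧ A 0 1 = Adj0.zero}

noncomputable instance {z : ℝ} {hz : (0:ℝ) ≤ 1} : Mul (UpperS z hz) :=
  ⟨fun A B => ⟨A.1 * B.1, by
    obtain ⟨hA1, hA2⟩ := A.2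
    obtain ⟨hB1, hB2⟩ := B.2
    constructor
    · show A.1 0 0 * B.1 0 0 + A.1 0 1 * B.1 1 0 = ttId 1 z hz
      rw [hA1, hB1, hB2, ttId_mul, Adj0.mul_zero, Adj0.add_zero]
    · show A.1 1 0 * B.1 0 0 + A.1 1 1 * B.1 1 0 = Adj0.zero
      rw [hA2, hB2, Adj0.zero_mul, Adj0.mul_zero, Adj0.add_zero]⟩⟩

noncomputable instance {z : ℝ} {hz : (0:ℝ) ≤ 1} : Mul (LowerS z hz) :=
  ⟨fun A B => ⟨A.1 * B.1, by
    obtain ⟨hA1, hA2⟩ := A.2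
    obtain ⟨hB1, hB2⟩ := B.2
    constructor
    · show A.1 0 0 * B.1 0 0 + A.1 0 1 * B.1 1 0 = ttId 1 z hz
      rw [hA1, hB1, hA2, ttId_mul, Adj0.zero_mul, Adj0.add_zero]
    · show A.1 0 0 * B.1 0 1 + A.1 0 1 * B.1 1 1 = Adj0.zero
      rw [hA1, hB2, hA2, ttId_mul, Adj0.zero_mul, Adj0.add_zero]⟩⟩

/-! ### Auxiliary material for Statement 15. -/

lemma foldl_optStep_some' {S : Type*} (op : S → S → S) (l : List S) (a : S) :
    l.foldl (optStep op) (some a) = some (l.foldl op a) := by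
  induction l generalizing a with
  | nil => rfl
  | cons x l ih => simp [optStep, List.foldl_cons, ih]

lemma foldl_map_hom' {A B : Type*} (f : A → B) (opA : A → A → A) (opB : B → B → B)
    (hf : ∀ x y, f (opA x y) = opB (f x) (f y)) (l : List A) (a : A) :
    (l.map f).foldl opB (f a) = f (l.foldl opA a) := by
  induction l generalizing a with
  | nil => rfl
  | cons x l ih => simp only [List.map_cons, List.foldl_cons, ← hf, ih]

lemma foldl_add_all_zero {S : Type*} [Add S] (l : List (Adj0 S)) (a : Adj0 S)
    (h : ∀ x ∈ l, x = Adj0.zero) : l.foldl (· + ·) a = a := by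
  induction l generalizing a with
  | nil => rfl
  | cons x l ih =>
    rw [List.foldl_cons, h x (by simp), Adj0.add_zero]
    exact ih a (fun y hy => h y (by simp [hy]))

lemma finSum_pair {S : Type*} [Add S] {n : ℕ} (hn : 2 ≤ n) (f : Fin n → Adj0 S) (d : Adj0 S)
    (h : ∀ t : Fin n, 2 ≤ (t : ℕ) → f t = Adj0.zero) :
    (finSum f).getD d = f ⟨0, by omega⟩ + f ⟨1, by omega⟩ := by
  obtain ⟨m, rfl⟩ : ∃ m, n = m + 2 := ⟨n - 2, by omega⟩
  rw [finSum, List.ofFn_succ, List.ofFn_succ, List.foldl_cons, List.foldl_cons]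
  have e0 : optStep (S := Adj0 S) (· + ·) none (f 0) = some (f 0) := rfl
  have e1 : optStep (S := Adj0 S) (· + ·) (some (f 0)) (f (0 : Fin (m+1)).succ)
      = some (f 0 + f (0 : Fin (m+1)).succ) := rfl
  rw [e0, e1, foldl_optStep_some', foldl_add_all_zero]
  · have h0 : (0 : Fin (m + 2)) = ⟨0, by omega⟩ := rfl
    have h1 : ((0 : Fin (m+1)).succ : Fin (m + 2)) = ⟨1, by omega⟩ := rfl
    rw [h0, h1]
    rfl
  · intro x hx
    rw [List.mem_ofFn] at hx
    obtain ⟨i, rfl⟩ := hx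
    exact h _ (by simp)

lemma exists_excedance {k : ℕ} (σ : Equiv.Perm (Fin k)) (h : σ ≠ Equiv.refl (Fin k)) :
    ∃ j : Fin k, (j : ℕ) < (σ j : ℕ) := by
  by_contra hc
  push_neg at hc
  apply h
  have key : ∀ v : ℕ, ∀ j : Fin k, (j : ℕ) = v → σ j = j := by
    intro v
    induction v using Nat.strong_induction_on with
    | _ v ih =>
      intro j hj
      rcases lt_or_eq_of_le (hc j) with hlt | heq
      · have h1 : σ (σ j) = σ j := ih ((σ j : ℕ)) (by omega) (σ j) rfl
        exact σ.injective h1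
      · exact Fin.ext heq
  exact Equiv.ext (fun j => key _ j rfl)

/-! ### The truncated tropical semiring `𝕋_{[0,1]}` concretely. -/

lemma Tb_le_one (a : TTb 0 1 le_rfl) : a.1 ≤ 1 := by
  rcases a.2 with h | h
  · rw [h]; norm_num
  · exact h.2

lemma Tb_nonneg (a : TTb 0 1 le_rfl) : 0 ≤ a.1 := by
  rcases a.2 with h | h
  · rw [h]
  · exact h.1

lemma Tb_val_mul (a b : TTb 0 1 le_rfl) : (a * b).1 = min (a.1 + b.1) 1 := by
  show (TTb.mul a b).1 = _
  unfold TTb.mul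
  split_ifs with h1 h2
  · rw [h1, zero_add, min_eq_left (Tb_le_one b)]
  · simp [h2, min_eq_left (Tb_le_one a)]
  · simp [h2]

lemma Tb_val_add (a b : TTb 0 1 le_rfl) : (a + b).1 = max a.1 b.1 := rfl

lemma Tb_mul_comm (a b : TTb 0 1 le_rfl) : a * b = b * a :=
  Subtype.ext (by rw [Tb_val_mul, Tb_val_mul, add_comm])

lemma tt_mul_comm (a b : TT 0 1 le_rfl) : a * b = b * a := by
  cases a <;> cases b <;> simp [Tb_mul_comm]

/-- The `1×1` matrix semigroup is commutative. -/
lemma mat1_comm (A B : MatSR (TT 0 1 le_rfl) 1) : A * B = B * A := by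
  funext i j
  have hi : i = 0 := Subsingleton.elim _ _
  have hj : j = 0 := Subsingleton.elim _ _
  subst hi; subst hj
  show matMul A B 0 0 = matMul B A 0 0
  have e : ∀ C D : MatSR (TT 0 1 le_rfl) 1, matMul C D 0 0 = C 0 0 * D 0 0 := by
    intro C D
    simp [matMul, finSum, List.ofFn_succ, optStep]
  rw [e, e, tt_mul_comm]

noncomputable section Stmt15Aux

/-- `0`, the multiplicative identity element of the interval part. -/
def tZ : TTb 0 1 le_rfl := ⟨0, Or.inl rfl⟩

lemma tZ_mul (b : TTb 0 1 le_rfl) : tZ * b = b := by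
  show TTb.mul tZ b = b
  unfold TTb.mul
  exact dif_pos rfl

/-- The matrix `[[0, v, ...],[-∞, m, ...],...]` with `-∞` in all unnamed entries. -/
def mkM (n : ℕ) (p : TTb 0 1 le_rfl × TTb 0 1 le_rfl) : MatSR (TT 0 1 le_rfl) n := fun i j =>
  if (i : ℕ) = 0 ∧ (j : ℕ) = 0 then Adj0.elem tZ
  else if (i : ℕ) = 0 ∧ (j : ℕ) = 1 then Adj0.elem p.1
  else if (i : ℕ) = 1 ∧ (j : ℕ) = 1 then Adj0.elem p.2
  else Adj0.zero

/-- The induced product on parameter pairs. -/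
def pMul (p q : TTb 0 1 le_rfl × TTb 0 1 le_rfl) : TTb 0 1 le_rfl × TTb 0 1 le_rfl :=
  (q.1 + p.1 * q.2, p.2 * q.2)

lemma mkM_mul {n : ℕ} (hn : 2 ≤ n) (p q : TTb 0 1 le_rfl × TTb 0 1 le_rfl) :
    mkM n p * mkM n q = mkM n (pMul p q) := by
  funext i j
  show matMul (mkM n p) (mkM n q) i j = _
  have hside : ∀ t : Fin n, 2 ≤ (t : ℕ) → mkM n p i t * mkM n q t j = Adj0.zero := by
    intro t ht
    have h1 : mkM n p i t = Adj0.zero := by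
      unfold mkM
      split_ifs with a1 a2 a3
      · exact absurd a1.2 (by omega)
      · exact absurd a2.2 (by omega)
      · exact absurd a3.2 (by omega)
      · rfl
    rw [h1, Adj0.zero_mul]
  show (finSum (fun t => mkM n p i t * mkM n q t j)).getD _ = _
  rw [finSum_pair hn _ _ hside]
  by_cases hi0 : (i : ℕ) = 0 <;> by_cases hj0 : (j : ℕ) = 0 <;>
    by_cases hi1 : (i : ℕ) = 1 <;> by_cases hj1 : (j : ℕ) = 1 <;>
    simp [mkM, pMul, hi0, hj0, hi1, hj1, tZ_mul] <;> omega

lemma mkM_inj {n : ℕ} (hn : 2 ≤ n) : Function.Injective (mkM n) := by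
  intro p q h
  have h1 := congrFun (congrFun h ⟨0, by omega⟩) ⟨1, by omega⟩
  have h2 := congrFun (congrFun h ⟨1, by omega⟩) ⟨1, by omega⟩
  simp only [mkM] at h1 h2
  norm_num at h1 h2
  exact Prod.ext (Subtype.ext (congrArg Subtype.val h1))
    (Subtype.ext (congrArg Subtype.val h2))

/-- The real shadow of `pMul`. -/
def rMul (a b : ℝ × ℝ) : ℝ × ℝ := (max b.1 (min (a.1 + b.2) 1), min (a.2 + b.2) 1)

def phiR (p : TTb 0 1 le_rfl × TTb 0 1 le_rfl) : ℝ × ℝ := (p.1.1, p.2.1)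

lemma phiR_hom (p q : TTb 0 1 le_rfl × TTb 0 1 le_rfl) :
    phiR (pMul p q) = rMul (phiR p) (phiR q) := by
  unfold phiR pMul rMul
  refine Prod.ext ?_ ?_
  · show ((q.1 + p.1 * q.2).1 : ℝ) = _
    rw [Tb_val_add, Tb_val_mul]
  · exact Tb_val_mul _ _

lemma rfold_le (β : ℝ) (hβ : 0 ≤ β) :
    ∀ (l : List (ℝ × ℝ)) (C : ℝ) (p : ℝ × ℝ), p.1 ≤ C →
      (∀ i (h : i < l.length), l[i].1 ≤ C + (i + 1) * β ∧ l[i].2 = β) →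
      (l.foldl rMul p).1 ≤ C + l.length * β := by
  intro l
  induction l with
  | nil => intro C p hp _; simpa using hp
  | cons q l ih =>
    intro C p hp hb
    have hq := hb 0 (by simp)
    simp only [List.getElem_cons_zero] at hq
    rw [List.foldl_cons]
    have step : (rMul p q).1 ≤ C + β := by
      unfold rMul
      simp only
      apply max_le
      · have := hq.1; push_cast at this ⊢; linarith
      · calc min (p.1 + q.2) 1 ≤ p.1 + q.2 := min_le_left _ _
          _ ≤ C + β := by rw [hq.2]; linarith
    have hbl : ∀ i (h : i < l.length), l[i].1 ≤ (C + β) + (i + 1) * β ∧ l[i].2 = β := by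
      intro i hi
      have := hb (i + 1) (by simp; omega)
      simp only [List.getElem_cons_succ] at this
      refine ⟨?_, this.2⟩
      have h1 := this.1
      push_cast at h1 ⊢
      linarith
    have := ih (C + β) (rMul p q) step hbl
    calc (l.foldl rMul (rMul p q)).1 ≤ (C + β) + l.length * β := this
      _ = C + (↑(q :: l).length) * β := by simp [List.length_cons]; ring
    
lemma rfold_ge (β : ℝ) (hβ : 0 ≤ β) :
    ∀ (l : List (ℝ × ℝ)) (p : ℝ × ℝ), (∀ q ∈ l, q.2 = β) →
      min (p.1 + l.length * β) 1 ≤ (l.foldl rMul p).1 := by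
  intro l
  induction l with
  | nil => intro p _; simpa using min_le_left p.1 1
  | cons q l ih =>
    intro p hm
    rw [List.foldl_cons]
    have hq2 : q.2 = β := hm q (by simp)
    have h2 := ih (rMul p q) (fun r hr => hm r (by simp [hr]))
    refine le_trans ?_ h2
    have hv' : min (p.1 + β) 1 ≤ (rMul p q).1 := by
      unfold rMul; simp only
      rw [hq2]
      exact le_max_right _ _
    rcases le_total (p.1 + β) 1 with hc | hc
    · have e : min (p.1 + β) 1 = p.1 + β := min_eq_left hc
      calc min (p.1 + ↑(q :: l).length * β) 1
          = min ((p.1 + β) + l.length * β) 1 := by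
            congr 1; push_cast [List.length_cons]; ring
        _ ≤ min ((rMul p q).1 + l.length * β) 1 := by
            apply min_le_min _ le_rfl
            have : p.1 + β ≤ (rMul p q).1 := e ▸ hv'
            linarith
    · have e : min (p.1 + β) 1 = 1 := min_eq_right hc
      have h1 : (1:ℝ) ≤ (rMul p q).1 := e ▸ hv'
      have hLβ : (0:ℝ) ≤ (l.length : ℝ) * β := by positivity
      calc min (p.1 + ↑(q :: l).length * β) 1 ≤ 1 := min_le_right _ _
        _ = min 1 1 := (min_self 1).symm
        _ ≤ min ((rMul p q).1 + l.length * β) 1 := min_le_min (by linarith) le_rfl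

lemma rfold_ge_at (β : ℝ) (hβ : 0 ≤ β) :
    ∀ (l : List (ℝ × ℝ)) (p : ℝ × ℝ), (∀ q ∈ l, q.2 = β) →
      ∀ i (h : i < l.length),
      min (l[i].1 + ((l.length - 1 - i : ℕ) : ℝ) * β) 1 ≤ (l.foldl rMul p).1 := by
  intro l
  induction l with
  | nil => intro p _ i hi; simp at hi
  | cons q l ih =>
    intro p hm i hi
    rw [List.foldl_cons]
    cases i with
    | zero =>
      simp only [List.getElem_cons_zero, List.length_cons]
      have hlen : (l.length + 1 - 1 - 0 : ℕ) = l.length := by omega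
      rw [hlen]
      have h2 := rfold_ge β hβ l (rMul p q) (fun r hr => hm r (by simp [hr]))
      refine le_trans (min_le_min ?_ le_rfl) h2
      have : q.1 ≤ (rMul p q).1 := le_max_left _ _
      linarith
    | succ i =>
      simp only [List.getElem_cons_succ, List.length_cons]
      have hi' : i < l.length := by simpa using hi
      have hlen : (l.length + 1 - 1 - (i + 1) : ℕ) = l.length - 1 - i := by omega
      rw [hlen]
      exact ih (rMul p q) (fun r hr => hm r (by simp [hr])) i hi'

end Stmt15Aux


/-- `M_n(𝕋_{[0,1]})` is strongly permutable iff `n = 1`. -/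
theorem stmt_15 (n : ℕ) (hn : 0 < n) :
    StronglyPermutable (MatSR (TT 0 1 le_rfl) n) ↔ n = 1 := by
  constructor
  · intro hsp
    by_contra hne
    have hn2 : 2 ≤ n := by omega
    obtain ⟨k, hk2, hperm⟩ := hsp
    obtain ⟨m, rfl⟩ : ∃ m, k = m + 1 := ⟨k - 1, by omega⟩
    have hm : 1 ≤ m := by omega
    -- real parameters
    set M : ℝ := (m : ℝ) with hM
    have hM1 : (1:ℝ) ≤ M := by rw [hM]; exact_mod_cast hm
    set β : ℝ := 1 / (2 * (M + 1)) with hβdef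
    have hβ : 0 < β := by rw [hβdef]; positivity
    set δ : ℝ := β / (M + 2) with hδdef
    have hδ : 0 < δ := by rw [hδdef]; positivity
    have hδβ : (M + 2) * δ = β := by rw [hδdef]; field_simp
    have hβ1 : (M + 1) * β = 1 / 2 := by rw [hβdef]; field_simp
    have hβδ : 0 < β - δ := by nlinarith
    -- the tuple of parameter pairs
    have hmem : ∀ j : Fin (m + 1),
        ((((j : ℕ) : ℝ) + 1) * (β - δ) = 0) ∨
        (0 ≤ (((j : ℕ) : ℝ) + 1) * (β - δ) ∧ (((j : ℕ) : ℝ) + 1) * (β - δ) ≤ 1) := by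
      intro j
      right
      have hjle : ((j : ℕ) : ℝ) + 1 ≤ M + 1 := by
        have h' : ((j : ℕ) : ℝ) ≤ (m : ℝ) := by exact_mod_cast Nat.lt_succ_iff.mp j.isLt
        rw [hM]; linarith
      constructor
      · positivity
      · nlinarith
    have hβmem : (β = 0) ∨ (0 ≤ β ∧ β ≤ 1) := by
      right
      refine ⟨hβ.le, ?_⟩
      nlinarith
    set pT : Fin (m + 1) → TTb 0 1 le_rfl × TTb 0 1 le_rfl :=
      fun j => (⟨(((j : ℕ) : ℝ) + 1) * (β - δ), hmem j⟩, ⟨β, hβmem⟩) with hpT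
    obtain ⟨σ, hσ, heq⟩ := hperm (fun i => mkM n (pT i))
    -- reduce finProd to a pair-level fold
    have key : ∀ h : Fin (m + 1) → TTb 0 1 le_rfl × TTb 0 1 le_rfl,
        finProd (fun i => mkM n (h i)) =
          some (mkM n ((List.ofFn fun i : Fin m => h i.succ).foldl pMul (h 0))) := by
      intro h
      have e1 : (List.ofFn fun i : Fin (m + 1) => mkM n (h i))
          = (List.ofFn h).map (mkM n) := by rw [List.map_ofFn]; rfl
      rw [finProd, e1, List.ofFn_succ, List.map_cons, List.foldl_cons]
      have e0 : optStep (S := MatSR (TT 0 1 le_rfl) n) (· * ·) none (mkM n (h 0))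
          = some (mkM n (h 0)) := rfl
      rw [e0, foldl_optStep_some',
        foldl_map_hom' (mkM n) pMul (· * ·) (fun x y => (mkM_mul hn2 x y).symm)]
    have h1 := key (fun i => pT (σ i))
    have h2 := key pT
    rw [h1, h2] at heq
    have hPP := mkM_inj hn2 (Option.some_injective _ heq)
    -- push to the real level
    have hR := congrArg phiR hPP
    rw [← foldl_map_hom' phiR pMul rMul phiR_hom,
        ← foldl_map_hom' phiR pMul rMul phiR_hom] at hR
    set rp : Fin (m + 1) → ℝ × ℝ := fun j => ((((j : ℕ) : ℝ) + 1) * (β - δ), β) with hrp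
    have hmapσ : (List.ofFn fun i : Fin m => pT (σ i.succ)).map phiR
        = List.ofFn fun i : Fin m => rp (σ i.succ) := by rw [List.map_ofFn]; rfl
    have hmapid : (List.ofFn fun i : Fin m => pT i.succ).map phiR
        = List.ofFn fun i : Fin m => rp i.succ := by rw [List.map_ofFn]; rfl
    have hphi : ∀ j, phiR (pT j) = rp j := fun j => rfl
    rw [hmapσ, hmapid, hphi, hphi] at hR
    have hV := congrArg Prod.fst hR
    -- upper bound for the identity product
    have hup : ((List.ofFn fun i : Fin m => rp i.succ).foldl rMul (rp 0)).1
        ≤ (β - δ) + M * β := by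
      have := rfold_le β hβ.le (List.ofFn fun i : Fin m => rp i.succ) (β - δ) (rp 0)
        (by simp [hrp]) ?_
      · simpa [hM] using this
      · intro i hi
        have hi' : i < m := by simpa using hi
        rw [List.getElem_ofFn]
        constructor
        · show ((((⟨i, by simpa using hi⟩ : Fin m).succ : ℕ) : ℝ) + 1) * (β - δ) ≤ _
          have hsv : (((⟨i, by simpa using hi⟩ : Fin m).succ : ℕ) : ℝ) = (i : ℝ) + 1 := by
            push_cast [Fin.val_succ]; ring
          rw [hsv]
          have hci : (0:ℝ) ≤ (i : ℝ) := by positivity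
          nlinarith
        · rfl
    -- lower bound for the permuted product
    obtain ⟨j, hj⟩ := exists_excedance σ hσ
    have hmemβ : ∀ q ∈ (List.ofFn fun i : Fin m => rp (σ i.succ)), q.2 = β := by
      intro q hq
      rw [List.mem_ofFn] at hq
      obtain ⟨i, rfl⟩ := hq
      rfl
    have hlow : min ((M + 2) * (β - δ)) 1
        ≤ ((List.ofFn fun i : Fin m => rp (σ i.succ)).foldl rMul (rp (σ 0))).1 := by
      induction j using Fin.cases with
      | zero =>
        have h0 : (1:ℝ) ≤ ((σ 0 : ℕ) : ℝ) := by exact_mod_cast hj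
        have := rfold_ge β hβ.le (List.ofFn fun i : Fin m => rp (σ i.succ)) ?_ ?_
        · have hge := rfold_ge β hβ.le (List.ofFn fun i : Fin m => rp (σ i.succ))
            (rp (σ 0)) hmemβ
          refine le_trans (min_le_min ?_ le_rfl) hge
          have hσ0 : (rp (σ 0)).1 = (((σ 0 : ℕ) : ℝ) + 1) * (β - δ) := rfl
          rw [hσ0]
          simp only [List.length_ofFn]
          rw [hM]
          nlinarith
        · exact rp 0
        · intro q hq
          rw [List.mem_ofFn] at hq
          obtain ⟨i, rfl⟩ := hq
          rfl
      | succ i =>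
        have hji : ((i.succ : ℕ) : ℝ) + 1 ≤ ((σ i.succ : ℕ) : ℝ) := by
          exact_mod_cast hj
        have hi' : (i : ℕ) < m := i.isLt
        have hge := rfold_ge_at β hβ.le (List.ofFn fun i : Fin m => rp (σ i.succ))
          (rp (σ 0)) hmemβ (i : ℕ) (by simpa using hi')
        refine le_trans ?_ hge
        apply min_le_min _ le_rfl
        · show (M + 2) * (β - δ) ≤ _
          rw [List.getElem_ofFn]
          show _ ≤ (((σ (⟨(i:ℕ), by simpa using hi'⟩ : Fin m).succ : ℕ) : ℝ) + 1) * (β - δ)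
            + ((((List.ofFn fun i : Fin m => rp (σ i.succ)).length - 1 - (i:ℕ) : ℕ)) : ℝ) * β
          have hfe : (⟨(i:ℕ), by simpa using hi'⟩ : Fin m) = i := rfl
          rw [hfe]
          have hlen : ((List.ofFn fun i : Fin m => rp (σ i.succ)).length - 1 - (i:ℕ) : ℕ)
              = m - 1 - (i : ℕ) := by simp
          rw [hlen]
          have hcast : ((m - 1 - (i : ℕ) : ℕ) : ℝ) = M - 1 - ((i:ℕ) : ℝ) := by
            have h1m : 1 + (i : ℕ) ≤ m := by omega
            have e2 : (m - 1 - (i : ℕ) : ℕ) = m - (1 + (i : ℕ)) := by omega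
            rw [hM, e2, Nat.cast_sub h1m]
            push_cast
            ring
          rw [hcast]
          have hsucc : ((i.succ : ℕ) : ℝ) = ((i : ℕ) : ℝ) + 1 := by
            rw [Fin.val_succ]; push_cast; ring
          rw [hsucc] at hji
          have hiM : ((i : ℕ) : ℝ) ≤ M - 1 := by
            have h' : ((i:ℕ):ℝ) ≤ (m:ℝ) - 1 := by
              have := i.isLt
              have : ((i:ℕ):ℝ) + 1 ≤ (m:ℝ) := by exact_mod_cast i.isLt
              linarith
            rw [hM]; linarith
          nlinarith
    -- contradiction
    rw [hV] at hlow
    have hfinal : (β - δ) + M * β < min ((M + 2) * (β - δ)) 1 := by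
      apply lt_min
      · nlinarith
      · nlinarith
    linarith [le_trans hlow hup]
  · rintro rfl
    refine ⟨2, le_rfl, ?_⟩
    intro s
    refine ⟨Equiv.swap 0 1, ?_, ?_⟩
    · intro h
      have h0 : Equiv.swap (0 : Fin 2) 1 0 = 0 := by rw [h]; rfl
      rw [Equiv.swap_apply_left] at h0
      exact (by decide : (1 : Fin 2) ≠ 0) h0
    · have e : ∀ t : Fin 2 → MatSR (TT 0 1 le_rfl) 1, finProd t = some (t 0 * t 1) := by
        intro t
        rw [finProd]
        simp [List.ofFn_succ, optStep]
      rw [e, e, Equiv.swap_apply_left, Equiv.swap_apply_right, mat1_comm]
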